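/- Let μ be a probability measure on a measurable space Ω, let f : ℝ → ℝ be convex with f(1) = 0, and let δ > 0. For any measurable set A ⊆ Ω with 0 < μ(A) < 1, the adversarial risk reduces to a two-variable optimization: R_adv(A) = sup { p₁·r₁ : r₀ ≥ 0, r₁ ≥ 0, (1−p₁) f(r₀) + p₁ f(r₁) ≤ δ, (1−p₁) r₀ + p₁ r₁ = 1 }, where p₁ = μ(A). -/

import Mathlib

open MeasureTheory

/-- The uncertainty set of density ratios: measurable, nonnegative functions `r` with
`∫ f (r ω) ∂μ ≤ δ` and `∫ r ω ∂μ = 1` (both integrals existing). -/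
def Uf {Ω : Type*} [MeasurableSpace Ω] (μ : Measure Ω) (f : ℝ → ℝ) (δ : ℝ) :
    Set (Ω → ℝ) :=
  {r | Measurable r ∧ (∀ ω, 0 ≤ r ω) ∧
    Integrable (fun ω => f (r ω)) μ ∧ Integrable r μ ∧
    (∫ ω, f (r ω) ∂μ) ≤ δ ∧ (∫ ω, r ω ∂μ) = 1}

/-- The adversarial risk of a classifier with error set `A` under the 0-1 loss:
the supremum of `∫_A r dμ` over density ratios `r` in the uncertainty set. -/
noncomputable def Radv {Ω : Type*} [MeasurableSpace Ω] (μ : Measure Ω)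
    (f : ℝ → ℝ) (δ : ℝ) (A : Set Ω) : ℝ :=
  sSup {x | ∃ r ∈ Uf μ f δ, x = ∫ ω in A, r ω ∂μ}

/-- The adversarial risk with the 0-1 loss reduces to a two-variable optimization over the
weights `r₀` (on the correctly classified part) and `r₁` (on the error set `A`),
with `p₁ = μ A`. -/
theorem stmt2 {Ω : Type*} [MeasurableSpace Ω] (μ : Measure Ω) [IsProbabilityMeasure μ]
    (f : ℝ → ℝ) (hconv : ConvexOn ℝ Set.univ f) (hf1 : f 1 = 0)
    (δ : ℝ) (hδ : 0 < δ) (A : Set Ω) (hA : MeasurableSet A)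
    (h0 : 0 < μ A) (h1 : μ A < 1) :
    Radv μ f δ A =
      sSup {x | ∃ r₀ r₁ : ℝ, 0 ≤ r₀ ∧ 0 ≤ r₁ ∧
        (1 - (μ A).toReal) * f r₀ + (μ A).toReal * f r₁ ≤ δ ∧
        (1 - (μ A).toReal) * r₀ + (μ A).toReal * r₁ = 1 ∧
        x = (μ A).toReal * r₁} := by
  classical
  set p := (μ A).toReal with hp
  have hpq : (μ A).toReal + (μ Aᶜ).toReal = 1 := by
    rw [← ENNReal.toReal_add (measure_ne_top _ _) (measure_ne_top _ _),
      measure_add_measure_compl hA, measure_univ, ENNReal.toReal_one]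
  have hq : (μ Aᶜ).toReal = 1 - p := by linarith
  have hp0 : 0 < p := ENNReal.toReal_pos h0.ne' (measure_ne_top _ _)
  have hq0 : 0 < (μ Aᶜ).toReal := by
    have : p < 1 := by
      rw [hp, ← ENNReal.toReal_one]
      exact ENNReal.toReal_strict_mono ENNReal.one_ne_top h1
    linarith
  have hfc : ContinuousOn f Set.univ := hconv.continuousOn isOpen_univ
  -- Jensen on a set
  have jensen : ∀ (s : Set Ω) (r : Ω → ℝ), MeasurableSet s → μ s ≠ 0 →
      Integrable r μ → Integrable (fun ω => f (r ω)) μ →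
      (μ s).toReal * f (⨍ ω in s, r ω ∂μ) ≤ ∫ ω in s, f (r ω) ∂μ := by
    intro s r hs hs0 hri hfi
    have hne : NeZero (μ.restrict s) := ⟨by simpa [Measure.restrict_eq_zero] using hs0⟩
    have h := ConvexOn.map_average_le (μ := μ.restrict s) (f := r) hconv hfc isClosed_univ
      (Filter.Eventually.of_forall (fun x => Set.mem_univ (r x)))
      hri.restrict (hfi.restrict : Integrable (fun ω => f (r ω)) (μ.restrict s))
    have havg : ⨍ ω in s, f (r ω) ∂μ = (μ s).toReal⁻¹ * ∫ ω in s, f (r ω) ∂μ := by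
      rw [average_eq, measureReal_restrict_apply_univ, measureReal_def, smul_eq_mul]
    rw [havg] at h
    have hμs : 0 < (μ s).toReal := ENNReal.toReal_pos hs0 (measure_ne_top _ _)
    calc (μ s).toReal * f (⨍ ω in s, r ω ∂μ)
        ≤ (μ s).toReal * ((μ s).toReal⁻¹ * ∫ ω in s, f (r ω) ∂μ) := by
          exact mul_le_mul_of_nonneg_left h hμs.le
      _ = ∫ ω in s, f (r ω) ∂μ := by field_simp
  have hseteq : {x | ∃ r ∈ Uf μ f δ, x = ∫ ω in A, r ω ∂μ} =
      {x | ∃ r₀ r₁ : ℝ, 0 ≤ r₀ ∧ 0 ≤ r₁ ∧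
        (1 - p) * f r₀ + p * f r₁ ≤ δ ∧
        (1 - p) * r₀ + p * r₁ = 1 ∧ x = p * r₁} := by
    ext x
    constructor
    · rintro ⟨r, ⟨hm, hnn, hfi, hri, hfδ, hr1⟩, rfl⟩
      refine ⟨⨍ ω in Aᶜ, r ω ∂μ, ⨍ ω in A, r ω ∂μ, ?_, ?_, ?_, ?_, ?_⟩
      · rw [average_eq, measureReal_restrict_apply_univ, measureReal_def, smul_eq_mul]
        exact mul_nonneg (by positivity) (setIntegral_nonneg hA.compl (fun ω _ => hnn ω))
      · rw [average_eq, measureReal_restrict_apply_univ, measureReal_def, smul_eq_mul]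
        exact mul_nonneg (by positivity) (setIntegral_nonneg hA (fun ω _ => hnn ω))
      · have hAc0 : μ Aᶜ ≠ 0 := fun h => by simp [h] at hq0
        have j1 := jensen A r hA h0.ne' hri hfi
        have j2 := jensen Aᶜ r hA.compl hAc0 hri hfi
        have hsplit : (∫ ω in A, f (r ω) ∂μ) + ∫ ω in Aᶜ, f (r ω) ∂μ = ∫ ω, f (r ω) ∂μ :=
          integral_add_compl hA hfi
        rw [← hq]
        linarith
      · have hsplit : (∫ ω in A, r ω ∂μ) + ∫ ω in Aᶜ, r ω ∂μ = ∫ ω, r ω ∂μ :=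
          integral_add_compl hA hri
        have e1 : p * ⨍ ω in A, r ω ∂μ = ∫ ω in A, r ω ∂μ := by
          rw [average_eq, measureReal_restrict_apply_univ, measureReal_def, smul_eq_mul, ← mul_assoc,
            mul_inv_cancel₀ hp0.ne', one_mul]
        have e2 : (μ Aᶜ).toReal * ⨍ ω in Aᶜ, r ω ∂μ = ∫ ω in Aᶜ, r ω ∂μ := by
          rw [average_eq, measureReal_restrict_apply_univ, measureReal_def, smul_eq_mul, ← mul_assoc,
            mul_inv_cancel₀ hq0.ne', one_mul]
        rw [← hq]
        linarith [hr1]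
      · rw [average_eq, measureReal_restrict_apply_univ, measureReal_def, smul_eq_mul, ← mul_assoc,
          mul_inv_cancel₀ hp0.ne', one_mul]
    · rintro ⟨r₀, r₁, h0', h1', hδ', hsum, rfl⟩
      refine ⟨A.piecewise (fun _ => r₁) (fun _ => r₀), ⟨?_, ?_, ?_, ?_, ?_, ?_⟩, ?_⟩
      · exact Measurable.piecewise hA measurable_const measurable_const
      · intro ω; by_cases hω : ω ∈ A <;> simp [Set.piecewise, hω, h0', h1']
      · have : (fun ω => f (A.piecewise (fun _ => r₁) (fun _ => r₀) ω)) =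
            A.piecewise (fun _ => f r₁) (fun _ => f r₀) := by
          ext ω; by_cases hω : ω ∈ A <;> simp [Set.piecewise, hω]
        rw [this]
        exact Integrable.piecewise hA (integrableOn_const (measure_ne_top _ _))
          (integrableOn_const (measure_ne_top _ _))
      · exact Integrable.piecewise hA (integrableOn_const (measure_ne_top _ _))
          (integrableOn_const (measure_ne_top _ _))
      · have : (fun ω => f (A.piecewise (fun _ => r₁) (fun _ => r₀) ω)) =
            A.piecewise (fun _ => f r₁) (fun _ => f r₀) := by
          ext ω; by_cases hω : ω ∈ A <;> simp [Set.piecewise, hω]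
        rw [this, integral_piecewise hA (integrableOn_const (measure_ne_top _ _))
          (integrableOn_const (measure_ne_top _ _)), setIntegral_const,
          setIntegral_const, measureReal_def, measureReal_def, smul_eq_mul, smul_eq_mul, hq]
        linarith
      · rw [integral_piecewise hA (integrableOn_const (measure_ne_top _ _))
          (integrableOn_const (measure_ne_top _ _)), setIntegral_const,
          setIntegral_const, measureReal_def, measureReal_def, smul_eq_mul, smul_eq_mul, hq]
        linarith
      · have : ∫ ω in A, A.piecewise (fun _ => r₁) (fun _ => r₀) ω ∂μ = ∫ (_ : Ω) in A, r₁ ∂μ :=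
          setIntegral_congr_fun hA (fun ω hω => by simp [Set.piecewise, hω])
        rw [this, setIntegral_const, measureReal_def, smul_eq_mul]
  rw [Radv, hseteq]
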